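/- If (λ₁,...,λₙ) is p-larger than (μ₁,...,μₙ) (i.e., ∏_{i=1}^j λ_(i) ≤ ∏_{i=1}^j μ_(i) for all j = 1,...,n), then for every u ∈ (0,1), ∏_{i=1}^n [λᵢ u/(1-(1-λᵢ)u)] ≤ ∏_{i=1}^n [μᵢ u/(1-(1-μᵢ)u)]. (Hence X_{1:n} ≤_{st} Y_{1:n} for series systems under the PO model.) -/

import Mathlib

open Finset

private lemma abel_nonneg (N : ℕ) (c d : ℕ → ℝ)
    (hc0 : ∀ i ≤ N, 0 ≤ c i)
    (hcm : ∀ i j, i ≤ j → j ≤ N → c j ≤ c i)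
    (hS : ∀ k ≤ N, 0 ≤ ∑ i ∈ range k, d i) :
    0 ≤ ∑ i ∈ range N, c i * d i := by
  have key : ∀ M ≤ N, c M * ∑ i ∈ range M, d i ≤ ∑ i ∈ range M, c i * d i := by
    intro M
    induction M with
    | zero => simp
    | succ m ih =>
      intro hm
      have hm' : m ≤ N := le_of_lt hm
      have h1 : c (m+1) * ∑ i ∈ range (m+1), d i ≤ c m * ∑ i ∈ range (m+1), d i :=
        mul_le_mul_of_nonneg_right (hcm m (m+1) (by omega) hm) (hS (m+1) hm)
      calc c (m+1) * ∑ i ∈ range (m+1), d i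
          ≤ c m * ∑ i ∈ range (m+1), d i := h1
        _ = c m * ∑ i ∈ range m, d i + c m * d m := by rw [Finset.sum_range_succ]; ring
        _ ≤ ∑ i ∈ range m, c i * d i + c m * d m := by linarith [ih hm']
        _ = ∑ i ∈ range (m+1), c i * d i := by rw [Finset.sum_range_succ]
  calc (0:ℝ) ≤ c N * ∑ i ∈ range N, d i :=
        mul_nonneg (hc0 N le_rfl) (hS N le_rfl)
    _ ≤ ∑ i ∈ range N, c i * d i := key N le_rfl

private lemma tangent_ineq {u : ℝ} (hu0 : 0 < u) (hu1 : u < 1) (s t : ℝ) :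
    (t - Real.log ((1-u) + u * Real.exp t)) - (s - Real.log ((1-u) + u * Real.exp s))
      ≤ ((1-u) / ((1-u) + u * Real.exp s)) * (t - s) := by
  have hv : 0 < 1 - u := by linarith
  have hPs : 0 < (1-u) + u * Real.exp s := by positivity
  have hPt : 0 < (1-u) + u * Real.exp t := by positivity
  set α : ℝ := u * Real.exp s / ((1-u) + u * Real.exp s) with hα
  have hα0 : 0 ≤ α := by positivity
  have hα1 : α ≤ 1 := by
    rw [hα, div_le_one hPs]; linarith
  have hconv : Real.exp (α * (t - s)) ≤ α * Real.exp (t - s) + (1 - α) := by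
    have h := convexOn_exp.2 (Set.mem_univ (t - s)) (Set.mem_univ (0:ℝ)) hα0
      (show (0:ℝ) ≤ 1 - α by linarith) (show α + (1 - α) = 1 by ring)
    simp only [smul_eq_mul, mul_zero, add_zero, Real.exp_zero, mul_one] at h
    exact h
  have hmul : ((1-u) + u * Real.exp s) * Real.exp (α * (t - s)) ≤ (1-u) + u * Real.exp t := by
    have h1 : ((1-u) + u * Real.exp s) * Real.exp (α * (t - s))
        ≤ ((1-u) + u * Real.exp s) * (α * Real.exp (t - s) + (1 - α)) :=
      mul_le_mul_of_nonneg_left hconv (le_of_lt hPs)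
    have hPα : ((1-u) + u * Real.exp s) * α = u * Real.exp s := by
      rw [hα]; field_simp
    have hest : Real.exp s * Real.exp (t - s) = Real.exp t := by
      rw [← Real.exp_add]; ring_nf
    have h2 : ((1-u) + u * Real.exp s) * (α * Real.exp (t - s) + (1 - α))
        = (1-u) + u * Real.exp t := by
      have expand : ((1-u) + u * Real.exp s) * (α * Real.exp (t - s) + (1 - α))
          = ((1-u) + u * Real.exp s) * α * Real.exp (t - s)
            + (((1-u) + u * Real.exp s) - ((1-u) + u * Real.exp s) * α) := by ring
      rw [expand, hPα, mul_assoc, hest]; ring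
    linarith
  have hlog : α * (t - s) ≤ Real.log ((1-u) + u * Real.exp t) - Real.log ((1-u) + u * Real.exp s) := by
    have := Real.log_le_log (by positivity) hmul
    rw [Real.log_mul (ne_of_gt hPs) (Real.exp_ne_zero _), Real.log_exp] at this
    linarith
  have h1α : (1 : ℝ) - α = (1-u) / ((1-u) + u * Real.exp s) := by
    rw [hα]; field_simp; ring
  rw [← h1α]; nlinarith [hlog]

private lemma sum_Iic_fin {m : ℕ} (f : Fin (m+1) → ℝ) (j : ℕ) (hj : j ≤ m) :
    ∑ i ∈ Iic (⟨j, Nat.lt_succ_of_le hj⟩ : Fin (m+1)), f i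
      = ∑ k ∈ range (j+1), f ⟨min k m, Nat.lt_succ_of_le (min_le_right k m)⟩ := by
  refine Finset.sum_bij' (fun (i : Fin (m+1)) (_ : i ∈ Iic _) => i.1)
    (fun (k : ℕ) (hk : k ∈ range (j+1)) =>
      (⟨k, by simp only [Finset.mem_range] at hk; omega⟩ : Fin (m+1)))
    ?_ ?_ ?_ ?_ ?_
  · intro a ha
    simp only [Finset.mem_Iic, Fin.le_def] at ha
    simp only [Finset.mem_range]; omega
  · intro k hk
    simp only [Finset.mem_range] at hk
    simp only [Finset.mem_Iic, Fin.le_def]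
    show k ≤ j
    omega
  · intro a _
    exact Fin.ext rfl
  · intro k _
    rfl
  · intro a ha
    simp only [Finset.mem_Iic, Fin.le_def] at ha
    have : min a.1 m = a.1 := by omega
    congr 1
    exact Fin.ext (by simp [this])

/-- `x` is p-larger than `y`: partial products of the increasing rearrangement
of `x` are dominated by those of `y`. -/
def PLarger {n : ℕ} (x y : Fin n → ℝ) : Prop :=
  ∀ j : Fin n, ∏ i ∈ Finset.Iic j, (x ∘ Tuple.sort x) i ≤
    ∏ i ∈ Finset.Iic j, (y ∘ Tuple.sort y) i

theorem series_po_st_order_of_pLarger {n : ℕ} (lam mu : Fin n → ℝ)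
    (hlam : ∀ i, 0 < lam i) (hmu : ∀ i, 0 < mu i)
    (hp : PLarger lam mu) :
    ∀ u : ℝ, u ∈ Set.Ioo (0:ℝ) 1 →
      ∏ i, lam i * u / (1 - (1 - lam i) * u) ≤
        ∏ i, mu i * u / (1 - (1 - mu i) * u) := by
  intro u hu
  obtain ⟨hu0, hu1⟩ := hu
  have hv : 0 < 1 - u := by linarith
  obtain _ | m := n
  · simp
  -- positivity of denominators and terms
  have hden : ∀ l : ℝ, 0 < l → 0 < 1 - (1 - l) * u := by
    intro l hl; nlinarith
  have hterm : ∀ l : ℝ, 0 < l → 0 < l * u / (1 - (1 - l) * u) := by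
    intro l hl; exact div_pos (by positivity) (hden l hl)
  set ψ : ℝ → ℝ := fun t => t - Real.log ((1-u) + u * Real.exp t) with hψ
  -- log of each term
  have hlogterm : ∀ l : ℝ, 0 < l →
      Real.log (l * u / (1 - (1 - l) * u)) = ψ (Real.log l) + Real.log u := by
    intro l hl
    have h1 : (1 : ℝ) - (1 - l) * u = (1-u) + u * l := by ring
    rw [h1, Real.log_div (by positivity) (by positivity), Real.log_mul (ne_of_gt hl) (ne_of_gt hu0)]
    simp only [hψ, Real.exp_log hl]
    ring
  set σ := Tuple.sort lam with hσ
  set τ := Tuple.sort mu with hτ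
  set idx : ℕ → Fin (m+1) := fun k => ⟨min k m, Nat.lt_succ_of_le (min_le_right k m)⟩ with hidx
  set a : ℕ → ℝ := fun k => Real.log (lam (σ (idx k))) with ha
  set b : ℕ → ℝ := fun k => Real.log (mu (τ (idx k))) with hb
  set c : ℕ → ℝ := fun k => (1-u) / ((1-u) + u * Real.exp (b k)) with hc
  set d : ℕ → ℝ := fun k => b k - a k with hd
  -- b is monotone
  have hbmono : ∀ i j : ℕ, i ≤ j → b i ≤ b j := by
    intro i j hij
    have h1 : idx i ≤ idx j := by
      simp only [hidx, Fin.mk_le_mk]; omega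
    have h2 : mu (τ (idx i)) ≤ mu (τ (idx j)) := Tuple.monotone_sort mu h1
    exact Real.log_le_log (hmu _) h2
  have hc0 : ∀ i ≤ m+1, 0 ≤ c i := by
    intro i _
    have : 0 < (1-u) + u * Real.exp (b i) := by positivity
    positivity
  have hcm : ∀ i j : ℕ, i ≤ j → j ≤ m+1 → c j ≤ c i := by
    intro i j hij _
    simp only [hc]
    apply div_le_div_of_nonneg_left (le_of_lt hv) (by positivity)
    have := Real.exp_le_exp.2 (hbmono i j hij)
    nlinarith
  -- partial sums
  have hS : ∀ k ≤ m+1, 0 ≤ ∑ i ∈ range k, d i := by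
    intro k hk
    obtain _ | j := k
    · simp
    have hj : j ≤ m := by omega
    have hpj := hp ⟨j, Nat.lt_succ_of_le hj⟩
    have hprodlam : ∀ x ∈ Iic (⟨j, Nat.lt_succ_of_le hj⟩ : Fin (m+1)),
        (0:ℝ) < (lam ∘ σ) x := fun x _ => hlam _
    have hprodmu : ∀ x ∈ Iic (⟨j, Nat.lt_succ_of_le hj⟩ : Fin (m+1)),
        (0:ℝ) < (mu ∘ τ) x := fun x _ => hmu _
    have hlogle : Real.log (∏ i ∈ Iic (⟨j, Nat.lt_succ_of_le hj⟩ : Fin (m+1)), (lam ∘ σ) i)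
        ≤ Real.log (∏ i ∈ Iic (⟨j, Nat.lt_succ_of_le hj⟩ : Fin (m+1)), (mu ∘ τ) i) :=
      Real.log_le_log (Finset.prod_pos hprodlam) hpj
    rw [Real.log_prod (fun x hx => ne_of_gt (hprodlam x hx)),
        Real.log_prod (fun x hx => ne_of_gt (hprodmu x hx))] at hlogle
    have hla : ∑ i ∈ Iic (⟨j, Nat.lt_succ_of_le hj⟩ : Fin (m+1)), Real.log ((lam ∘ σ) i)
        = ∑ i ∈ range (j+1), a i := by
      rw [sum_Iic_fin (fun i => Real.log ((lam ∘ σ) i)) j hj]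
      rfl
    have hlb : ∑ i ∈ Iic (⟨j, Nat.lt_succ_of_le hj⟩ : Fin (m+1)), Real.log ((mu ∘ τ) i)
        = ∑ i ∈ range (j+1), b i := by
      rw [sum_Iic_fin (fun i => Real.log ((mu ∘ τ) i)) j hj]
      rfl
    rw [hla, hlb] at hlogle
    have : ∑ i ∈ range (j+1), d i = ∑ i ∈ range (j+1), b i - ∑ i ∈ range (j+1), a i := by
      simp only [hd]; rw [Finset.sum_sub_distrib]
    rw [this]; linarith
  -- Abel
  have habel := abel_nonneg (m+1) c d hc0 hcm hS
  -- termwise tangent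
  have htang : ∀ k : ℕ, ψ (a k) - ψ (b k) ≤ c k * (a k - b k) := by
    intro k
    exact tangent_ineq hu0 hu1 (b k) (a k)
  have hsum1 : ∑ k ∈ range (m+1), (ψ (a k) - ψ (b k))
      ≤ ∑ k ∈ range (m+1), c k * (a k - b k) :=
    Finset.sum_le_sum (fun k _ => htang k)
  have hsum2 : ∑ k ∈ range (m+1), c k * (a k - b k)
      = - ∑ k ∈ range (m+1), c k * d k := by
    rw [← Finset.sum_neg_distrib]
    apply Finset.sum_congr rfl
    intro k _
    simp only [hd]; ring
  have hmain : ∑ k ∈ range (m+1), ψ (a k) ≤ ∑ k ∈ range (m+1), ψ (b k) := by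
    rw [Finset.sum_sub_distrib] at hsum1
    rw [hsum2] at hsum1
    linarith
  -- now convert products to sums of logs
  have hPlam : (0:ℝ) < ∏ i, lam i * u / (1 - (1 - lam i) * u) :=
    Finset.prod_pos (fun i _ => hterm _ (hlam i))
  have hPmu : (0:ℝ) < ∏ i, mu i * u / (1 - (1 - mu i) * u) :=
    Finset.prod_pos (fun i _ => hterm _ (hmu i))
  rw [← Real.log_le_log_iff hPlam hPmu,
      Real.log_prod (fun i _ => ne_of_gt (hterm _ (hlam i))),
      Real.log_prod (fun i _ => ne_of_gt (hterm _ (hmu i)))]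
  have hLlam : ∑ i, Real.log (lam i * u / (1 - (1 - lam i) * u))
      = ∑ i, ψ (Real.log (lam i)) + (m+1) * Real.log u := by
    rw [Finset.sum_congr rfl (fun i _ => hlogterm _ (hlam i)), Finset.sum_add_distrib]
    simp [mul_comm]
  have hLmu : ∑ i, Real.log (mu i * u / (1 - (1 - mu i) * u))
      = ∑ i, ψ (Real.log (mu i)) + (m+1) * Real.log u := by
    rw [Finset.sum_congr rfl (fun i _ => hlogterm _ (hmu i)), Finset.sum_add_distrib]
    simp [mul_comm]
  rw [hLlam, hLmu]
  have hidx_fin : ∀ i : Fin (m+1), idx i.1 = i := by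
    intro i
    simp only [hidx]
    exact Fin.ext (by simp; omega)
  have hreindexlam : ∑ i, ψ (Real.log (lam i)) = ∑ k ∈ range (m+1), ψ (a k) := by
    rw [← Equiv.sum_comp σ (fun i => ψ (Real.log (lam i))), ← Fin.sum_univ_eq_sum_range]
    apply Finset.sum_congr rfl
    intro i _
    simp only [ha, hidx_fin i]
  have hreindexmu : ∑ i, ψ (Real.log (mu i)) = ∑ k ∈ range (m+1), ψ (b k) := by
    rw [← Equiv.sum_comp τ (fun i => ψ (Real.log (mu i))), ← Fin.sum_univ_eq_sum_range]
    apply Finset.sum_congr rfl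
    intro i _
    simp only [hb, hidx_fin i]
  rw [hreindexlam, hreindexmu]
  linarith
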